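/- Let {φ_x : x∈Ω} and {ψ_y : y∈Ω} be two mutually unbiased bases of a d-dimensional complex Hilbert space H with |Ω| = d. Then the operators {E(x,y) = (1/2)·(A(x)B(y) + B(y)A(x)) : (x,y) ∈ Ω×Ω} are linearly independent in L(H) if and only if −1 is not an eigenvalue of the Haagerup matrix Λ. -/

import Mathlib

open scoped InnerProductSpace

noncomputable section

/-- The rank-one operator `|φ⟩⟨φ|`. -/
def outer {H : Type*} [NormedAddCommGroup H] [InnerProductSpace ℂ H] (φ : H) : H →L[ℂ] H :=
  (innerSL ℂ φ).smulRight φ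

/-- The Haagerup matrix of a pair of bases, with entries
`Λ_{(x,y),(z,t)} = d·Re[⟨ψ_y, φ_z⟩⟨φ_z, ψ_t⟩⟨ψ_t, φ_x⟩⟨φ_x, ψ_y⟩]`. -/
def haagerup {Ω H : Type*} [NormedAddCommGroup H] [InnerProductSpace ℂ H]
    (d : ℕ) (φ ψ : Ω → H) : Matrix (Ω × Ω) (Ω × Ω) ℝ := fun p q =>
  (d : ℝ) * (⟪ψ p.2, φ q.1⟫_ℂ * ⟪φ q.1, ψ q.2⟫_ℂ * ⟪ψ q.2, φ p.1⟫_ℂ * ⟪φ p.1, ψ p.2⟫_ℂ).re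

namespace JordanMUBAux

variable {H : Type*} [NormedAddCommGroup H] [InnerProductSpace ℂ H]
variable {Ω : Type*} [Fintype Ω] [DecidableEq Ω]

/-- Coordinates of an operator with respect to the two bases. -/
def coordMap (φ ψ : Ω → H) : (H →L[ℂ] H) →ₗ[ℂ] Matrix Ω Ω ℂ where
  toFun T := Matrix.of fun z t => ⟪φ z, T (ψ t)⟫_ℂ
  map_add' T S := by
    ext z t
    simp [inner_add_right]
  map_smul' c T := by
    ext z t
    simp [inner_smul_right]

lemma coordMap_apply (φ ψ : Ω → H) (T : H →L[ℂ] H) (z t : Ω) :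
    coordMap φ ψ T z t = ⟪φ z, T (ψ t)⟫_ℂ := rfl

lemma coordMap_ker (φ ψ : OrthonormalBasis Ω ℂ H) :
    LinearMap.ker (coordMap (fun x => φ x) (fun y => ψ y)) = ⊥ := by
  rw [LinearMap.ker_eq_bot']
  intro T hT
  have hz : ∀ t, T (ψ t) = 0 := by
    intro t
    rw [← φ.sum_repr' (T (ψ t))]
    refine Finset.sum_eq_zero fun z _ => ?_
    have : coordMap (fun x => φ x) (fun y => ψ y) T z t = 0 := by rw [hT]; rfl
    rw [coordMap_apply] at this
    rw [this, zero_smul]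
  ext x
  have hx := ψ.sum_repr' x
  calc T x = T (∑ t, ⟪ψ t, x⟫_ℂ • ψ t) := by rw [hx]
    _ = ∑ t, ⟪ψ t, x⟫_ℂ • T (ψ t) := by rw [map_sum]; simp
    _ = 0 := by simp [hz]

/-- The coefficient matrix of the Jordan products. -/
def cMat (φ ψ : Ω → H) : Matrix (Ω × Ω) (Ω × Ω) ℂ := fun r p =>
  (1 / 2 : ℂ) * ((if r = p then 1 else 0) * ⟪φ p.1, ψ p.2⟫_ℂ
    + ⟪φ r.1, ψ p.2⟫_ℂ * ⟪ψ p.2, φ p.1⟫_ℂ * ⟪φ p.1, ψ r.2⟫_ℂ)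

end JordanMUBAux

open JordanMUBAux in
theorem jordan_products_linearIndependent_iff_haagerup
    {H : Type*} [NormedAddCommGroup H] [InnerProductSpace ℂ H] [FiniteDimensional ℂ H]
    {Ω : Type*} [Fintype Ω] [DecidableEq Ω]
    (d : ℕ) (hcard : Fintype.card Ω = d) (hdim : Module.finrank ℂ H = d)
    (φ ψ : OrthonormalBasis Ω ℂ H)
    (hMUB : ∀ x y : Ω, ‖⟪φ x, ψ y⟫_ℂ‖ = 1 / Real.sqrt d) :
    LinearIndependent ℂ (fun p : Ω × Ω => (1 / 2 : ℝ) •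
        (outer (φ p.1) * outer (ψ p.2) + outer (ψ p.2) * outer (φ p.1)) : Ω × Ω → H →L[ℂ] H)
      ↔ ¬ Module.End.HasEigenvalue
          (Matrix.toLin' (haagerup d (fun x => φ x) (fun y => ψ y))) (-1) := by
  classical
  rcases isEmpty_or_nonempty Ω with hΩ | hΩ
  · constructor
    · intro _ hEig
      apply hEig
      have : Subsingleton ((Ω × Ω) → ℝ) := by infer_instance
      exact (Submodule.eq_bot_iff _).2 fun x _ => Subsingleton.elim x 0
    · intro _
      exact linearIndependent_empty_type
  have hd0 : 0 < d := hcard ▸ Fintype.card_pos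
  have hdR : (d : ℝ) ≠ 0 := Nat.cast_ne_zero.2 hd0.ne'
  have hdC : (d : ℂ) ≠ 0 := Nat.cast_ne_zero.2 hd0.ne'
  -- MU property as a product identity
  have hprod : ∀ x y : Ω, ⟪ψ y, φ x⟫_ℂ * ⟪φ x, ψ y⟫_ℂ = (d : ℂ)⁻¹ := by
    intro x y
    rw [← inner_conj_symm (ψ y) (φ x), Complex.conj_mul']
    have habs : ‖⟪φ x, ψ y⟫_ℂ‖ = 1 / Real.sqrt d := hMUB x y
    have hsq : (1 / Real.sqrt d : ℝ) ^ 2 = (d : ℝ)⁻¹ := by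
      rw [div_pow, one_pow, Real.sq_sqrt (by positivity), one_div]
    rw [habs, ← Complex.ofReal_pow, hsq]
    push_cast
    ring
  -- Parseval identities
  have hP1 : ∀ y y' : Ω, (∑ z, ⟪ψ y, φ z⟫_ℂ * ⟪φ z, ψ y'⟫_ℂ)
      = if y = y' then 1 else 0 := by
    intro y y'
    rw [φ.sum_inner_mul_inner (ψ y) (ψ y')]
    exact orthonormal_iff_ite.mp ψ.orthonormal y y'
  have hP2 : ∀ x x' : Ω, (∑ t, ⟪φ x', ψ t⟫_ℂ * ⟪ψ t, φ x⟫_ℂ)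
      = if x' = x then 1 else 0 := by
    intro x x'
    rw [ψ.sum_inner_mul_inner (φ x') (φ x)]
    exact orthonormal_iff_ite.mp φ.orthonormal x' x
  set Λ : Matrix (Ω × Ω) (Ω × Ω) ℝ := haagerup d (fun x => φ x) (fun y => ψ y) with hΛ
  set C : Matrix (Ω × Ω) (Ω × Ω) ℂ := cMat (fun x => φ x) (fun y => ψ y) with hC
  -- the coordinates of the Jordan products are the columns of C
  have hcoord : ∀ p : Ω × Ω,
      coordMap (fun x => φ x) (fun y => ψ y) ((1 / 2 : ℝ) •
        (outer (φ p.1) * outer (ψ p.2) + outer (ψ p.2) * outer (φ p.1)))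
      = Matrix.of fun z t => C (z, t) p := by
    intro p
    ext z t
    rw [Matrix.of_apply]
    show ⟪φ z, ((1 / 2 : ℝ) •
        (outer (φ p.1) * outer (ψ p.2) + outer (ψ p.2) * outer (φ p.1))) (ψ t)⟫_ℂ
      = C (z, t) p
    rw [ContinuousLinearMap.smul_apply, RCLike.real_smul_eq_coe_smul (K := ℂ),
      inner_smul_right]
    rw [ContinuousLinearMap.add_apply, ContinuousLinearMap.mul_apply,
      ContinuousLinearMap.mul_apply, inner_add_right]
    simp only [outer, ContinuousLinearMap.smulRight_apply, innerSL_apply_apply,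
      inner_smul_right, inner_smul_left, map_mul, apply_ite (starRingEnd ℂ)]
    try simp only [inner_conj_symm]
    have h1 : ⟪(ψ : Ω → H) p.2, ψ t⟫_ℂ = if p.2 = t then 1 else 0 :=
      orthonormal_iff_ite.mp ψ.orthonormal p.2 t
    have h2 : ⟪(φ : Ω → H) z, φ p.1⟫_ℂ = if z = p.1 then 1 else 0 :=
      orthonormal_iff_ite.mp φ.orthonormal z p.1
    rw [h1, h2]
    have h3 : ((z, t) = p) ↔ (z = p.1 ∧ p.2 = t) := by
      constructor
      · rintro rfl; exact ⟨rfl, rfl⟩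
      · rintro ⟨rfl, rfl⟩; rfl
    rw [hC]
    simp only [cMat, h3, ite_and]
    by_cases hz : z = p.1 <;> by_cases ht : p.2 = t <;> simp [hz, ht] <;> ring
  -- the Gram identity  Cᴴ * C = (2d)⁻¹ • (1 + Λ)
  have hgram : C.conjTranspose * C = ((2 * (d : ℂ))⁻¹) •
      ((1 : Matrix (Ω × Ω) (Ω × Ω) ℂ) + Λ.map Complex.ofReal) := by
    ext p q
    rw [Matrix.mul_apply]
    simp only [Matrix.conjTranspose_apply]
    have hsummand : ∀ r : Ω × Ω, star (C r p) * C r q =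
        (1 / 4 : ℂ) *
          (((if r = p then 1 else 0) * (if r = q then 1 else 0) *
              (⟪ψ p.2, φ p.1⟫_ℂ * ⟪φ q.1, ψ q.2⟫_ℂ))
          + ((if r = p then 1 else 0) *
              (⟪ψ p.2, φ p.1⟫_ℂ * (⟪φ r.1, ψ q.2⟫_ℂ * ⟪ψ q.2, φ q.1⟫_ℂ * ⟪φ q.1, ψ r.2⟫_ℂ)))
          + ((if r = q then 1 else 0) *
              (⟪φ q.1, ψ q.2⟫_ℂ * (⟪ψ p.2, φ r.1⟫_ℂ * ⟪φ p.1, ψ p.2⟫_ℂ * ⟪ψ r.2, φ p.1⟫_ℂ)))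
          + ((⟪ψ p.2, φ r.1⟫_ℂ * ⟪φ r.1, ψ q.2⟫_ℂ) * (⟪φ q.1, ψ r.2⟫_ℂ * ⟪ψ r.2, φ p.1⟫_ℂ)
              * (⟪φ p.1, ψ p.2⟫_ℂ * ⟪ψ q.2, φ q.1⟫_ℂ))) := by
      intro r
      show (starRingEnd ℂ) (C r p) * C r q = _
      simp only [hC, cMat, map_mul, map_add, map_one, map_zero, apply_ite (starRingEnd ℂ),
        inner_conj_symm, map_div₀, map_ofNat]
      ring
    rw [Finset.sum_congr rfl fun r _ => hsummand r, ← Finset.mul_sum]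
    simp only [Finset.sum_add_distrib]
    have hS1 : (∑ r : Ω × Ω, (if r = p then (1:ℂ) else 0) * (if r = q then 1 else 0) *
        (⟪ψ p.2, φ p.1⟫_ℂ * ⟪φ q.1, ψ q.2⟫_ℂ))
        = if p = q then (d : ℂ)⁻¹ else 0 := by
      rw [Finset.sum_eq_single p]
      · by_cases hpq : p = q
        · subst hpq; simp [hprod]
        · simp [hpq, Ne.symm hpq]
      · intro r _ hr; simp [hr]
      · intro h; exact absurd (Finset.mem_univ p) h
    have hS2 : (∑ r : Ω × Ω, (if r = p then (1:ℂ) else 0) *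
          (⟪ψ p.2, φ p.1⟫_ℂ * (⟪φ r.1, ψ q.2⟫_ℂ * ⟪ψ q.2, φ q.1⟫_ℂ * ⟪φ q.1, ψ r.2⟫_ℂ)))
        = ⟪ψ p.2, φ p.1⟫_ℂ * (⟪φ p.1, ψ q.2⟫_ℂ * ⟪ψ q.2, φ q.1⟫_ℂ * ⟪φ q.1, ψ p.2⟫_ℂ) := by
      rw [Finset.sum_eq_single p]
      · simp
      · intro r _ hr; simp [hr]
      · intro h; exact absurd (Finset.mem_univ p) h
    have hS3 : (∑ r : Ω × Ω, (if r = q then (1:ℂ) else 0) *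
          (⟪φ q.1, ψ q.2⟫_ℂ * (⟪ψ p.2, φ r.1⟫_ℂ * ⟪φ p.1, ψ p.2⟫_ℂ * ⟪ψ r.2, φ p.1⟫_ℂ)))
        = ⟪φ q.1, ψ q.2⟫_ℂ * (⟪ψ p.2, φ q.1⟫_ℂ * ⟪φ p.1, ψ p.2⟫_ℂ * ⟪ψ q.2, φ p.1⟫_ℂ) := by
      rw [Finset.sum_eq_single q]
      · simp
      · intro r _ hr; simp [hr]
      · intro h; exact absurd (Finset.mem_univ q) h
    have hS4 : (∑ r : Ω × Ω, (⟪ψ p.2, φ r.1⟫_ℂ * ⟪φ r.1, ψ q.2⟫_ℂ) *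
          (⟪φ q.1, ψ r.2⟫_ℂ * ⟪ψ r.2, φ p.1⟫_ℂ) * (⟪φ p.1, ψ p.2⟫_ℂ * ⟪ψ q.2, φ q.1⟫_ℂ))
        = if p = q then (d : ℂ)⁻¹ else 0 := by
      have hfac : (∑ r : Ω × Ω, (⟪ψ p.2, φ r.1⟫_ℂ * ⟪φ r.1, ψ q.2⟫_ℂ) *
            (⟪φ q.1, ψ r.2⟫_ℂ * ⟪ψ r.2, φ p.1⟫_ℂ) * (⟪φ p.1, ψ p.2⟫_ℂ * ⟪ψ q.2, φ q.1⟫_ℂ))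
          = (∑ z, ⟪ψ p.2, φ z⟫_ℂ * ⟪φ z, ψ q.2⟫_ℂ) * (∑ t, ⟪φ q.1, ψ t⟫_ℂ * ⟪ψ t, φ p.1⟫_ℂ)
            * (⟪φ p.1, ψ p.2⟫_ℂ * ⟪ψ q.2, φ q.1⟫_ℂ) := by
        rw [Fintype.sum_prod_type, Finset.sum_mul_sum, Finset.sum_mul]
        refine Finset.sum_congr rfl fun z _ => ?_
        rw [Finset.sum_mul]
      rw [hfac, hP1, hP2]
      rcases eq_or_ne p q with hpq | hpq
      · subst hpq
        rw [mul_comm ⟪φ p.1, ψ p.2⟫_ℂ ⟪ψ p.2, φ p.1⟫_ℂ, hprod]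
        simp
      · rw [if_neg hpq]
        by_cases h : p.2 = q.2
        · have h2 : ¬ q.1 = p.1 := fun hh => hpq (Prod.ext hh.symm h)
          simp [h, h2]
        · simp [h]
    rw [hS1, hS2, hS3, hS4]
    have hre : ∀ a b c e : ℂ, a + b + c + e = (a + e) + (b + c) := fun a b c e => by ring
    rw [hre]
    have hmid : ⟪ψ p.2, φ p.1⟫_ℂ * (⟪φ p.1, ψ q.2⟫_ℂ * ⟪ψ q.2, φ q.1⟫_ℂ * ⟪φ q.1, ψ p.2⟫_ℂ)
        + ⟪φ q.1, ψ q.2⟫_ℂ * (⟪ψ p.2, φ q.1⟫_ℂ * ⟪φ p.1, ψ p.2⟫_ℂ * ⟪ψ q.2, φ p.1⟫_ℂ)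
        = ((2 * Λ p q / d : ℝ) : ℂ) := by
      set w : ℂ := ⟪ψ p.2, φ q.1⟫_ℂ * ⟪φ q.1, ψ q.2⟫_ℂ * ⟪ψ q.2, φ p.1⟫_ℂ * ⟪φ p.1, ψ p.2⟫_ℂ
        with hw
      have hconj : (starRingEnd ℂ) w = ⟪ψ p.2, φ p.1⟫_ℂ *
          (⟪φ p.1, ψ q.2⟫_ℂ * ⟪ψ q.2, φ q.1⟫_ℂ * ⟪φ q.1, ψ p.2⟫_ℂ) := by
        rw [hw]
        simp only [map_mul, inner_conj_symm]
        ring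
      have hΛpq : Λ p q = (d : ℝ) * w.re := by rw [hΛ]; rfl
      calc _ = (starRingEnd ℂ) w + w := by rw [hconj]; congr 1; rw [hw]; ring
        _ = w + (starRingEnd ℂ) w := by ring
        _ = ((2 * w.re : ℝ) : ℂ) := Complex.add_conj w
        _ = ((2 * Λ p q / d : ℝ) : ℂ) := by
            rw [hΛpq]; congr 1; field_simp
    rw [hmid]
    rw [Matrix.smul_apply, Matrix.add_apply, Matrix.one_apply, Matrix.map_apply]
    rw [smul_eq_mul]
    push_cast
    by_cases hpq : p = q
    · rw [if_pos hpq, if_pos hpq]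
      field_simp
      ring
    · rw [if_neg hpq, if_neg hpq]
      field_simp
      try ring
  -- linear independence ↔ det C ≠ 0
  have hli : (LinearIndependent ℂ (fun p : Ω × Ω => (1 / 2 : ℝ) •
        (outer (φ p.1) * outer (ψ p.2) + outer (ψ p.2) * outer (φ p.1)) : Ω × Ω → H →L[ℂ] H))
      ↔ C.det ≠ 0 := by
    have hfun : ((coordMap (fun x => φ x) (fun y => ψ y)) ∘ (fun p : Ω × Ω => (1 / 2 : ℝ) •
          (outer (φ p.1) * outer (ψ p.2) + outer (ψ p.2) * outer (φ p.1)) : Ω × Ω → H →L[ℂ] H))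
        = fun p : Ω × Ω => (Matrix.of fun z t => C (z, t) p : Matrix Ω Ω ℂ) :=
      funext fun p => hcoord p
    rw [← LinearMap.linearIndependent_iff (coordMap (fun x => φ x) (fun y => ψ y))
      (coordMap_ker φ ψ), hfun]
    rw [Fintype.linearIndependent_iff]
    constructor
    · intro hind
      rw [ne_eq, ← Matrix.exists_mulVec_eq_zero_iff (M := C), not_exists]
      intro g
      simp only [not_exists, not_and]
      intro hg hmul
      apply hg
      funext q
      apply hind g _ q
      ext z t
      have := congrFun hmul (z, t)
      simpa [Matrix.mulVec, dotProduct, Matrix.sum_apply, mul_comm] using this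
    · intro hdet g hg q
      by_contra hgq
      rw [ne_eq, ← Matrix.exists_mulVec_eq_zero_iff (M := C)] at hdet
      apply hdet
      refine ⟨g, fun h => hgq (by rw [h]; rfl), ?_⟩
      funext r
      simpa [Matrix.mulVec, dotProduct, Matrix.sum_apply, mul_comm] using
        congrFun (congrFun hg r.1) r.2
  -- det C ≠ 0 ↔ det (1 + Λ) ≠ 0
  have hdet : C.det ≠ 0 ↔ ((1 : Matrix (Ω × Ω) (Ω × Ω) ℝ) + Λ).det ≠ 0 := by
    have h1 : (C.conjTranspose * C).det = (starRingEnd ℂ) C.det * C.det := by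
      rw [Matrix.det_mul, Matrix.det_conjTranspose]; rfl
    have h2 : (C.conjTranspose * C).det = ((2 * (d : ℂ))⁻¹) ^ (Fintype.card (Ω × Ω)) *
        (((1 : Matrix (Ω × Ω) (Ω × Ω) ℝ) + Λ).map Complex.ofReal).det := by
      rw [hgram, Matrix.det_smul]
      congr 2
      ext p q
      simp [Matrix.one_apply, apply_ite Complex.ofReal]
    have h3 : (((1 : Matrix (Ω × Ω) (Ω × Ω) ℝ) + Λ).map Complex.ofReal).det
        = (((1 : Matrix (Ω × Ω) (Ω × Ω) ℝ) + Λ).det : ℂ) := by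
      rw [show ((1 : Matrix (Ω × Ω) (Ω × Ω) ℝ) + Λ).map Complex.ofReal
          = Complex.ofRealHom.mapMatrix ((1 : Matrix (Ω × Ω) (Ω × Ω) ℝ) + Λ) from rfl,
        ← RingHom.map_det]
      rfl
    constructor
    · intro hc h0
      have : (C.conjTranspose * C).det = 0 := by rw [h2, h3, h0]; simp
      rw [h1] at this
      rcases mul_eq_zero.mp this with h | h
      · exact hc (by simpa using congrArg (starRingEnd ℂ) h)
      · exact hc h
    · intro hr hc
      have : (C.conjTranspose * C).det = 0 := by rw [h1, hc, mul_zero]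
      rw [h2, h3] at this
      rcases mul_eq_zero.mp this with h | h
      · have : (2 * (d : ℂ)) ≠ 0 := by
          simp [hdC]
        exact absurd h (pow_ne_zero _ (inv_ne_zero this))
      · exact hr (by exact_mod_cast h)
  -- eigenvalue ↔ det (1 + Λ) = 0
  have heig : Module.End.HasEigenvalue (Matrix.toLin' Λ) (-1)
      ↔ ((1 : Matrix (Ω × Ω) (Ω × Ω) ℝ) + Λ).det = 0 := by
    rw [Module.End.hasEigenvalue_iff, Submodule.ne_bot_iff,
      ← Matrix.exists_mulVec_eq_zero_iff (M := (1 : Matrix (Ω × Ω) (Ω × Ω) ℝ) + Λ)]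
    constructor
    · rintro ⟨v, hv, hv0⟩
      rw [Module.End.mem_eigenspace_iff, Matrix.toLin'_apply] at hv
      refine ⟨v, hv0, ?_⟩
      rw [Matrix.add_mulVec, Matrix.one_mulVec, hv]
      simp
    · rintro ⟨v, hv0, hv⟩
      refine ⟨v, ?_, hv0⟩
      rw [Module.End.mem_eigenspace_iff, Matrix.toLin'_apply]
      rw [Matrix.add_mulVec, Matrix.one_mulVec] at hv
      have : Λ.mulVec v = -v := by linear_combination (norm := module) hv
      rw [this]
      module
  rw [hli, hdet, heig]
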